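/- No weakly 2-random set is cototal. -/

import Mathlib

open MeasureTheory

/-- A set (of any primcodable type) is computably enumerable. -/
def CE {α : Type*} [Primcodable α] (S : Set α) : Prop :=
  ∃ f : α →. ℕ, Partrec f ∧ S = f.Dom

/-- The `y`-th finite set in a canonical listing of all finite subsets of `ℕ`. -/
def Dfin (y : ℕ) : Set ℕ := ↑(Denumerable.ofNat (Finset ℕ) y)

/-- Application of the enumeration operator with c.e. index set `W` to an oracle `X`. -/
def enumOp (W : Set ℕ) (X : Set ℕ) : Set ℕ :=
  {x | ∃ y, Nat.pair x y ∈ W ∧ Dfin y ⊆ X}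

/-- Enumeration reducibility. -/
def EnumRed (A B : Set ℕ) : Prop := ∃ W : Set ℕ, CE W ∧ A = enumOp W B

/-- Enumeration equivalence. -/
def EnumEquiv (A B : Set ℕ) : Prop := EnumRed A B ∧ EnumRed B A

/-- Application of a hyper-enumeration operator with c.e. index set `W` to an oracle `X`. -/
def henumOp (W : Set ℕ) (X : Set ℕ) : Set ℕ :=
  {x | ∀ f : List ℕ, ∃ n y,
    Nat.pair (Encodable.encode (f.take n)) (Nat.pair x y) ∈ W ∧ Dfin y ⊆ X}

/-- Hyper-enumeration reducibility. -/
def HypEnumRed (B A : Set ℕ) : Prop := ∃ W : Set ℕ, CE W ∧ B = henumOp W A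

def Cototal (A : Set ℕ) : Prop := EnumRed A Aᶜ

def HypCototal (A : Set ℕ) : Prop := HypEnumRed A Aᶜ

def UnifIntroenum (X : Set ℕ) : Prop :=
  X.Infinite ∧ ∃ W : Set ℕ, CE W ∧ ∀ Y ⊆ X, Y.Infinite → enumOp W Y = X

def Introenum (X : Set ℕ) : Prop :=
  X.Infinite ∧ ∀ Y ⊆ X, Y.Infinite → ∃ W : Set ℕ, CE W ∧ enumOp W Y = X

/-- View a point of Cantor space as a subset of `ℕ`. -/
def toSet (A : ℕ → Bool) : Set ℕ := {n | A n = true}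

/-- Remove `n` from (the set coded by) `A`. -/
def drop (A : ℕ → Bool) (n : ℕ) : ℕ → Bool := fun m => if m = n then false else A m

/-- `A` is `Ψ`-autoreducible. -/
def AutoRed (Ψ : ℕ → (ℕ → Bool) → Bool) (A : ℕ → Bool) : Prop :=
  ∀ n, A n = Ψ n (drop A n)

/-- The basic clopen cylinder of a finite binary string. -/
def cyl (σ : List Bool) : Set (ℕ → Bool) := {A | ∀ i : Fin σ.length, A i = σ.get i}

/-- `μ` is the uniform (fair-coin) measure on Cantor space: it gives each cylinder
of a string of length `k` measure `2⁻ᵏ`.  (This characterizes the measure uniquely.) -/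
def IsCoinMeasure (μ : Measure (ℕ → Bool)) : Prop :=
  ∀ σ : List Bool, μ (cyl σ) = 2⁻¹ ^ σ.length

/-- The first `k` bits of `A`. -/
def res (A : ℕ → Bool) (k : ℕ) : List Bool := List.ofFn fun i : Fin k => A i

/-- A `Π⁰₂` class in Cantor space. -/
def IsPi02 (C : Set (ℕ → Bool)) : Prop :=
  ∃ R : ℕ → List Bool → Bool, Computable (fun p : ℕ × List Bool => R p.1 p.2) ∧
    C = {A | ∀ m, ∃ k, R m (res A k) = true}

/-- A `Π⁰₃` class in Cantor space. -/
def IsPi03 (C : Set (ℕ → Bool)) : Prop :=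
  ∃ R : ℕ → ℕ → List Bool → Bool,
    Computable (fun p : ℕ × ℕ × List Bool => R p.1 p.2.1 p.2.2) ∧
    C = {A | ∀ m, ∃ k, ∀ j, R m k (res A j) = true}

/-- The `m`-th level of the open test determined by the c.e. set `W` of pairs. -/
def testSet (W : Set (ℕ × List Bool)) (m : ℕ) : Set (ℕ → Bool) :=
  ⋃ σ ∈ {σ | (m, σ) ∈ W}, cyl σ

/-- Martin-Löf randomness (with respect to a measure `μ` on Cantor space). -/
def MLRandom (μ : Measure (ℕ → Bool)) (A : ℕ → Bool) : Prop :=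
  ∀ W : Set (ℕ × List Bool), CE W →
    (∀ m, μ (testSet W m) ≤ 2⁻¹ ^ m) → ∃ m, A ∉ testSet W m

/-- 2-randomness: passing all uniformly `Σ⁰₂` tests. -/
def TwoRandom (μ : Measure (ℕ → Bool)) (A : ℕ → Bool) : Prop :=
  ∀ R : ℕ → ℕ → List Bool → Bool,
    Computable (fun p : ℕ × ℕ × List Bool => R p.1 p.2.1 p.2.2) →
    (∀ m, μ {A | ∃ k, ∀ j, R m k (res A j) = true} ≤ 2⁻¹ ^ m) →
    ∃ m, A ∉ {A | ∃ k, ∀ j, R m k (res A j) = true}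

/-- Weak 2-randomness: avoiding every null `Π⁰₂` class. -/
def Weak2Random (μ : Measure (ℕ → Bool)) (A : ℕ → Bool) : Prop :=
  ∀ C : Set (ℕ → Bool), IsPi02 C → μ C = 0 → A ∉ C

/-- Weak 3-randomness: avoiding every null `Π⁰₃` class. -/
def Weak3Random (μ : Measure (ℕ → Bool)) (A : ℕ → Bool) : Prop :=
  ∀ C : Set (ℕ → Bool), IsPi03 C → μ C = 0 → A ∉ C


open scoped ENNReal
section MeasDev
open ENNReal

@[simp] lemma res_length (A : ℕ → Bool) (k : ℕ) : (res A k).length = k := List.length_ofFn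

lemma mem_cyl_iff_res {A : ℕ → Bool} {σ : List Bool} : A ∈ cyl σ ↔ res A σ.length = σ := by
  constructor
  · intro h
    apply List.ext_get (by simp)
    intro i h1 h2
    simpa [res] using h ⟨i, h2⟩
  · intro h i
    have h2 : (i : ℕ) < (res A σ.length).length := by simp [i.2]
    have := congrArg (fun l : List Bool => l.getD i true) h
    simpa [List.getD_eq_getElem, h2, i.2, res] using this

lemma mem_cyl_res (A : ℕ → Bool) (k : ℕ) : A ∈ cyl (res A k) := by
  rw [mem_cyl_iff_res]
  apply List.ext_get (by simp)
  intro i h1 h2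
  simp [res]

lemma cyl_nil : cyl [] = Set.univ := by
  ext A; simp only [Set.mem_univ, iff_true]; intro i; exact i.elim0

lemma measurableSet_cyl (σ : List Bool) : MeasurableSet (cyl σ) := by
  have : cyl σ = ⋂ i : Fin σ.length, {A : ℕ → Bool | A i = σ.get i} := by
    ext A; simp [cyl]
  rw [this]
  exact MeasurableSet.iInter fun i => (measurable_pi_apply (i:ℕ)) (MeasurableSet.singleton _)

lemma res_getD (A : ℕ → Bool) (k j : ℕ) (d : Bool) :
    (res A k).getD j d = if j < k then A j else d := by
  by_cases h : j < k
  · rw [List.getD_eq_getElem _ _ (by simpa using h)]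
    simp [res, h]
  · rw [List.getD_eq_default _ _ (by simpa using Nat.le_of_not_lt h)]
    simp [h]

lemma mem_cyl_iff_getD {A : ℕ → Bool} {σ : List Bool} :
    A ∈ cyl σ ↔ ∀ i < σ.length, A i = σ.getD i true := by
  constructor
  · intro h i hi
    simpa [List.getD_eq_getElem, hi] using h ⟨i, hi⟩
  · intro h i
    simpa [List.getD_eq_getElem, i.2] using h i i.2

lemma cyl_inter_cases (σ τ : List Bool) :
    cyl σ ∩ cyl τ = cyl σ ∨ cyl σ ∩ cyl τ = cyl τ ∨ cyl σ ∩ cyl τ = ∅ := by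
  by_cases h : ∀ i < min σ.length τ.length, σ.getD i true = τ.getD i true
  · rcases le_total σ.length τ.length with hl | hl
    · right; left
      apply Set.inter_eq_self_of_subset_right
      intro A hA
      rw [mem_cyl_iff_getD] at *
      intro i hi
      rw [hA i (lt_of_lt_of_le hi hl)] at *
      exact (h i (by omega)).symm ▸ rfl
    · left
      apply Set.inter_eq_self_of_subset_left
      intro A hA
      rw [mem_cyl_iff_getD] at *
      intro i hi
      rw [hA i (lt_of_lt_of_le hi hl)]
      exact (h i (by omega))
  · right; right
    push_neg at h
    obtain ⟨i, hi, hne⟩ := h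
    ext A
    simp only [Set.mem_inter_iff, Set.mem_empty_iff_false, iff_false]
    rintro ⟨h1, h2⟩
    rw [mem_cyl_iff_getD] at h1 h2
    exact hne ((h1 i (by omega)).symm.trans (h2 i (by omega)))

/-- countable unions of cylinders -/
def CU : Set (Set (ℕ → Bool)) := {U | ∃ S : Set (List Bool), U = ⋃ σ ∈ S, cyl σ}

lemma cyl_mem_CU (σ : List Bool) : cyl σ ∈ CU :=
  ⟨{σ}, by simp⟩

lemma empty_mem_CU : (∅ : Set (ℕ → Bool)) ∈ CU := ⟨∅, by simp⟩

lemma univ_mem_CU : (Set.univ : Set (ℕ → Bool)) ∈ CU := ⟨{[]}, by simp [cyl_nil]⟩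

lemma CU_measurable {U : Set (ℕ → Bool)} (h : U ∈ CU) : MeasurableSet U := by
  obtain ⟨S, rfl⟩ := h
  exact MeasurableSet.biUnion S.to_countable fun σ _ => measurableSet_cyl σ

lemma CU_iUnion {ι : Sort*} [Countable ι] {U : ι → Set (ℕ → Bool)} (h : ∀ i, U i ∈ CU) :
    (⋃ i, U i) ∈ CU := by
  choose S hS using h
  refine ⟨⋃ i, S i, ?_⟩
  simp only [Set.biUnion_iUnion]
  exact Set.iUnion_congr hS

lemma CU_inter {U V : Set (ℕ → Bool)} (hU : U ∈ CU) (hV : V ∈ CU) : U ∩ V ∈ CU := by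
  obtain ⟨S, rfl⟩ := hU
  obtain ⟨T, rfl⟩ := hV
  refine ⟨{ρ | ∃ σ ∈ S, ∃ τ ∈ T, cyl σ ∩ cyl τ = cyl ρ}, ?_⟩
  ext A
  constructor
  · rintro ⟨hA1, hA2⟩
    simp only [Set.mem_iUnion] at hA1 hA2
    obtain ⟨σ, hσ, h1⟩ := hA1
    obtain ⟨τ, hτ, h2⟩ := hA2
    rcases cyl_inter_cases σ τ with hc | hc | hc
    · exact Set.mem_biUnion ⟨σ, hσ, τ, hτ, hc⟩ (hc ▸ ⟨h1, h2⟩)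
    · exact Set.mem_biUnion ⟨σ, hσ, τ, hτ, hc⟩ (hc ▸ ⟨h1, h2⟩)
    · exact absurd (show A ∈ cyl σ ∩ cyl τ from ⟨h1, h2⟩) (by rw [hc]; simp)
  · rintro hA
    simp only [Set.mem_iUnion] at hA
    obtain ⟨ρ, ⟨σ, hσ, τ, hτ, hc⟩, hAρ⟩ := hA
    have : A ∈ cyl σ ∩ cyl τ := hc ▸ hAρ
    exact ⟨Set.mem_biUnion hσ this.1, Set.mem_biUnion hτ this.2⟩

lemma CU_biInter_finset {ι : Type*} (s : Finset ι) {U : ι → Set (ℕ → Bool)}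
    (h : ∀ i ∈ s, U i ∈ CU) : (⋂ i ∈ s, U i) ∈ CU := by
  classical
  induction s using Finset.induction with
  | empty => simpa using univ_mem_CU
  | insert _ _ hx ih =>
    rename_i a s
    simp only [Finset.mem_insert] at h
    rw [Finset.set_biInter_insert]
    exact CU_inter (h a (Or.inl rfl)) (ih fun i hi => h i (Or.inr hi))

/-- the coordinate sets are in CU -/
lemma coord_mem_CU (n : ℕ) (b : Bool) : {A : ℕ → Bool | A n = b} ∈ CU := by
  refine ⟨{σ | σ.length = n + 1 ∧ σ.getD n true = b}, ?_⟩
  ext A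
  simp only [Set.mem_setOf_eq, Set.mem_iUnion]
  constructor
  · intro h
    refine ⟨res A (n+1), ⟨by simp, ?_⟩, mem_cyl_res A (n+1)⟩
    rw [res_getD]
    simp [h]
  · rintro ⟨σ, ⟨hlen, hval⟩, hA⟩
    rw [mem_cyl_iff_getD] at hA
    rw [hA n (by omega), hval]

lemma compl_cyl_mem_CU (σ : List Bool) : (cyl σ)ᶜ ∈ CU := by
  have : (cyl σ)ᶜ = ⋃ i : Fin σ.length, {A : ℕ → Bool | A i = !(σ.getD i true)} := by
    ext A
    simp only [Set.mem_compl_iff, Set.mem_iUnion, Set.mem_setOf_eq, mem_cyl_iff_getD]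
    constructor
    · intro h
      push_neg at h
      obtain ⟨i, hi, hne⟩ := h
      exact ⟨⟨i, hi⟩, by cases hB : A i <;> cases hC : σ.getD i true <;> simp_all⟩
    · rintro ⟨i, hi⟩ h
      rw [h i i.2] at hi
      simp at hi
  rw [this]
  exact CU_iUnion fun i => coord_mem_CU i _

def Cyls : Set (Set (ℕ → Bool)) := {S | ∃ σ, S = cyl σ}

lemma isPiSystem_Cyls : IsPiSystem Cyls := by
  rintro _ ⟨σ, rfl⟩ _ ⟨τ, rfl⟩ hne
  rcases cyl_inter_cases σ τ with hc | hc | hc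
  · rw [hc]; exact ⟨σ, rfl⟩
  · rw [hc]; exact ⟨τ, rfl⟩
  · rw [hc] at hne; simp at hne

lemma generateFrom_Cyls :
    (inferInstance : MeasurableSpace (ℕ → Bool)) = MeasurableSpace.generateFrom Cyls := by
  apply le_antisymm
  · rw [show (inferInstance : MeasurableSpace (ℕ → Bool)) = MeasurableSpace.pi from rfl]
    apply iSup_le
    intro n
    rw [MeasurableSpace.comap_le_iff_le_map]
    intro s _
    have hmeas : ∀ T ∈ CU, MeasurableSet[MeasurableSpace.generateFrom Cyls] T := by
      rintro _ ⟨S, rfl⟩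
      exact MeasurableSet.biUnion S.to_countable
        fun σ _ => MeasurableSpace.measurableSet_generateFrom ⟨σ, rfl⟩
    have : (fun A : ℕ → Bool => A n) ⁻¹' s = ⋃ b ∈ s, {A : ℕ → Bool | A n = b} := by
      ext A; simp
    rw [MeasurableSpace.map_def, this]
    exact MeasurableSet.biUnion s.to_countable fun b _ => hmeas _ (coord_mem_CU n b)
  · rw [MeasurableSpace.generateFrom_le_iff]
    rintro _ ⟨σ, rfl⟩
    exact measurableSet_cyl σ

lemma coin_prob {μ : Measure (ℕ → Bool)} (hμ : IsCoinMeasure μ) : μ Set.univ = 1 := by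
  have := hμ []
  rw [cyl_nil] at this
  simpa using this

lemma coin_unique {μ ν : Measure (ℕ → Bool)} (hμ : IsCoinMeasure μ) (hν : IsCoinMeasure ν) :
    μ = ν := by
  have hfin : IsFiniteMeasure μ := ⟨by rw [coin_prob hμ]; exact ENNReal.one_lt_top⟩
  exact ext_of_generate_finite Cyls generateFrom_Cyls isPiSystem_Cyls
    (by rintro _ ⟨σ, rfl⟩; rw [hμ σ, hν σ]) (by rw [coin_prob hμ, coin_prob hν])

/-- flip the n-th bit -/
def flipFn (n : ℕ) (A : ℕ → Bool) : ℕ → Bool := fun m => if m = n then !(A m) else A m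

lemma flipFn_measurable (n : ℕ) : Measurable (flipFn n) := by
  apply measurable_pi_lambda
  intro m
  by_cases h : m = n
  · subst h
    simp only [flipFn, if_pos rfl]
    exact Measurable.comp (measurable_from_top : Measurable Bool.not) (measurable_pi_apply m)
  · simp only [flipFn, if_neg h]
    exact measurable_pi_apply m

lemma flipFn_invol (n : ℕ) (A : ℕ → Bool) : flipFn n (flipFn n A) = A := by
  funext m
  by_cases h : m = n <;> simp [flipFn, h]

lemma getD_set (σ : List Bool) (n i : ℕ) (b d : Bool) :
    (σ.set n b).getD i d = if i = n ∧ i < σ.length then b else σ.getD i d := by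
  by_cases h1 : i < σ.length
  · rw [List.getD_eq_getElem _ _ (by simpa using h1)]
    rw [List.getElem_set]
    by_cases h2 : i = n
    · subst h2
      simp [h1]
    · rw [if_neg (by omega), if_neg (by tauto), List.getD_eq_getElem _ _ h1]
  · rw [List.getD_eq_default _ _ (by simpa using Nat.le_of_not_lt h1),
      List.getD_eq_default _ _ (by simpa using Nat.le_of_not_lt h1), if_neg (by tauto)]

lemma flipFn_preimage_cyl (n : ℕ) (σ : List Bool) :
    flipFn n ⁻¹' cyl σ = cyl (σ.set n (!(σ.getD n true))) := by
  ext A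
  simp only [Set.mem_preimage, mem_cyl_iff_getD, List.length_set]
  constructor
  · intro h i hi
    rw [getD_set]
    by_cases hin : i = n
    · subst hin
      have := h i hi
      simp only [flipFn, if_pos rfl] at this
      rw [if_pos ⟨rfl, hi⟩, ← this]
      simp
    · have := h i hi
      simp only [flipFn, if_neg hin] at this
      rw [if_neg (by tauto)]
      exact this
  · intro h i hi
    have := h i hi
    rw [getD_set] at this
    by_cases hin : i = n
    · subst hin
      rw [if_pos ⟨rfl, hi⟩] at this
      simp only [flipFn, if_pos rfl, this]
      simp
    · rw [if_neg (by tauto)] at this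
      simpa [flipFn, if_neg hin] using this

lemma flipFn_measure_preserving {μ : Measure (ℕ → Bool)} (hμ : IsCoinMeasure μ) (n : ℕ)
    {S : Set (ℕ → Bool)} (hS : MeasurableSet S) : μ (flipFn n ⁻¹' S) = μ S := by
  have hmap : IsCoinMeasure (μ.map (flipFn n)) := by
    intro σ
    rw [Measure.map_apply (flipFn_measurable n) (measurableSet_cyl σ), flipFn_preimage_cyl]
    rw [hμ _]
    simp
  have heq : μ.map (flipFn n) = μ := coin_unique hmap hμ
  conv_rhs => rw [← heq]
  rw [Measure.map_apply (flipFn_measurable n) hS]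

section Apx

/-- approximable from outside by countable unions of cylinders and inside by complements -/
def Apx (μ : Measure (ℕ → Bool)) (C : Set (ℕ → Bool)) : Prop :=
  MeasurableSet C ∧ ∀ δ : ℝ≥0∞, δ ≠ 0 →
    (∃ U ∈ CU, C ⊆ U ∧ μ (U \ C) ≤ δ) ∧ (∃ K, Kᶜ ∈ CU ∧ K ⊆ C ∧ μ (C \ K) ≤ δ)

variable {μ : Measure (ℕ → Bool)}

lemma apx_compl {C : Set (ℕ → Bool)} (h : Apx μ C) : Apx μ Cᶜ := by
  refine ⟨h.1.compl, fun δ hδ => ?_⟩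
  obtain ⟨⟨U, hU, hCU, hUm⟩, ⟨K, hK, hKC, hKm⟩⟩ := h.2 δ hδ
  constructor
  · refine ⟨Kᶜ, hK, Set.compl_subset_compl.2 hKC, ?_⟩
    have : Kᶜ \ Cᶜ = C \ K := by ext x; simp [Set.mem_diff]; tauto
    rwa [this]
  · refine ⟨Uᶜ, by rwa [compl_compl], Set.compl_subset_compl.2 hCU, ?_⟩
    have : Cᶜ \ Uᶜ = U \ C := by ext x; simp [Set.mem_diff]; tauto
    rwa [this]

lemma half_pow_ne_top (k : ℕ) : ((2:ℝ≥0∞)⁻¹) ^ k ≠ ⊤ :=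
  ENNReal.pow_ne_top (by simp)

lemma tsum_half_pow : (∑' m : ℕ, ((2:ℝ≥0∞)⁻¹) ^ (m + 1)) = 1 := by
  have h := ENNReal.tsum_geometric (2:ℝ≥0∞)⁻¹
  rw [ENNReal.one_sub_inv_two] at h
  have : (∑' m : ℕ, ((2:ℝ≥0∞)⁻¹) ^ (m + 1)) = 2⁻¹ * ∑' m : ℕ, ((2:ℝ≥0∞)⁻¹) ^ m := by
    rw [← ENNReal.tsum_mul_left]
    congr 1
    funext m
    rw [pow_succ, mul_comm]
  rw [this, h, inv_inv, ENNReal.inv_mul_cancel two_ne_zero ENNReal.ofNat_ne_top]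

lemma tsum_half_bound (δ : ℝ≥0∞) : (∑' m : ℕ, δ * ((2:ℝ≥0∞)⁻¹) ^ (m + 1)) = δ := by
  rw [ENNReal.tsum_mul_left, tsum_half_pow, mul_one]

variable (hcoin : IsCoinMeasure μ)
include hcoin

lemma coin_finite : IsFiniteMeasure μ :=
  ⟨by rw [coin_prob hcoin]; exact ENNReal.one_lt_top⟩

lemma coin_ne_top (S : Set (ℕ → Bool)) : μ S ≠ ⊤ := by
  have := coin_finite hcoin
  exact measure_ne_top μ S

lemma exists_acc {K : ℕ → Set (ℕ → Bool)} (δ : ℝ≥0∞) (hδ : δ ≠ 0) :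
    ∃ N, μ (⋃ m, K m) ≤ μ (Set.accumulate K N) + δ := by
  by_cases h0 : μ (⋃ m, K m) ≤ δ
  · exact ⟨0, le_add_of_nonneg_of_le zero_le h0⟩
  push_neg at h0
  have hne : μ (⋃ m, K m) ≠ 0 := by
    intro h
    rw [h] at h0
    exact hδ (le_antisymm (le_of_lt h0) zero_le) |>.elim
  have hfin : μ (⋃ m, K m) ≠ ⊤ := coin_ne_top hcoin _
  have hlt : μ (⋃ m, K m) - δ < μ (⋃ m, K m) := ENNReal.sub_lt_self hfin hne hδ
  rw [measure_iUnion_eq_iSup_accumulate (μ := μ)] at hlt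
  obtain ⟨N, hN⟩ := lt_iSup_iff.1 hlt
  rw [← measure_iUnion_eq_iSup_accumulate (μ := μ)] at hN
  refine ⟨N, ?_⟩
  calc μ (⋃ m, K m) = μ (⋃ m, K m) - δ + δ := (tsub_add_cancel_of_le (le_of_lt h0)).symm
    _ ≤ μ (Set.accumulate K N) + δ := add_le_add_left hN.le δ

lemma apx_iUnion {C : ℕ → Set (ℕ → Bool)} (h : ∀ m, Apx μ (C m)) : Apx μ (⋃ m, C m) := by
  refine ⟨MeasurableSet.iUnion fun m => (h m).1, fun δ hδ => ?_⟩
  have hδ2 : δ / 2 ≠ 0 := by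
    simp only [ne_eq, ENNReal.div_eq_zero_iff, ENNReal.ofNat_ne_top, or_false]
    exact hδ
  have hδm : ∀ m : ℕ, (δ / 2) * (2:ℝ≥0∞)⁻¹ ^ (m + 1) ≠ 0 := by
    intro m
    simp only [ne_eq, mul_eq_zero, not_or]
    exact ⟨hδ2, pow_ne_zero _ (ENNReal.inv_ne_zero.2 ENNReal.ofNat_ne_top)⟩
  choose U hU hCU hUm using fun m => ((h m).2 _ (hδm m)).1
  choose K hK hKC hKm using fun m => ((h m).2 _ (hδm m)).2
  constructor
  · refine ⟨⋃ m, U m, CU_iUnion hU, Set.iUnion_mono hCU, ?_⟩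
    have hsub : (⋃ m, U m) \ (⋃ m, C m) ⊆ ⋃ m, (U m \ C m) := by
      rintro x ⟨hx1, hx2⟩
      simp only [Set.mem_iUnion] at hx1 ⊢
      obtain ⟨m, hm⟩ := hx1
      exact ⟨m, hm, fun hc => hx2 (Set.mem_iUnion.2 ⟨m, hc⟩)⟩
    calc μ ((⋃ m, U m) \ (⋃ m, C m)) ≤ μ (⋃ m, (U m \ C m)) := measure_mono hsub
      _ ≤ ∑' m, μ (U m \ C m) := measure_iUnion_le _
      _ ≤ ∑' m, (δ / 2) * (2:ℝ≥0∞)⁻¹ ^ (m + 1) := ENNReal.tsum_le_tsum hUm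
      _ = δ / 2 := tsum_half_bound _
      _ ≤ δ := ENNReal.half_le_self
  · obtain ⟨N, hN⟩ := exists_acc hcoin (K := K) _ hδ2
    refine ⟨Set.accumulate K N, ?_, ?_, ?_⟩
    · rw [Set.accumulate_def, Set.compl_iUnion₂]
      have : (⋂ m, ⋂ (_ : m ≤ N), (K m)ᶜ) = ⋂ m ∈ Finset.range (N + 1), (K m)ᶜ := by
        apply Set.iInter_congr
        intro m
        simp [Nat.lt_succ_iff]
      rw [this]
      exact CU_biInter_finset _ fun m _ => hK m
    · rw [Set.accumulate_def]
      exact Set.iUnion₂_subset fun m _ => (hKC m).trans (Set.subset_iUnion C m)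
    · have hsub : (⋃ m, C m) \ Set.accumulate K N ⊆
          ((⋃ m, C m) \ (⋃ m, K m)) ∪ ((⋃ m, K m) \ Set.accumulate K N) := by
        rintro x ⟨hx1, hx2⟩
        by_cases hx : x ∈ ⋃ m, K m
        · exact Or.inr ⟨hx, hx2⟩
        · exact Or.inl ⟨hx1, hx⟩
      have h1 : μ ((⋃ m, C m) \ (⋃ m, K m)) ≤ δ / 2 := by
        have : (⋃ m, C m) \ (⋃ m, K m) ⊆ ⋃ m, (C m \ K m) := by
          rintro x ⟨hx1, hx2⟩
          simp only [Set.mem_iUnion] at hx1 ⊢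
          obtain ⟨m, hm⟩ := hx1
          exact ⟨m, hm, fun hc => hx2 (Set.mem_iUnion.2 ⟨m, hc⟩)⟩
        calc μ ((⋃ m, C m) \ (⋃ m, K m)) ≤ μ (⋃ m, (C m \ K m)) := measure_mono this
          _ ≤ ∑' m, μ (C m \ K m) := measure_iUnion_le _
          _ ≤ ∑' m, (δ / 2) * (2:ℝ≥0∞)⁻¹ ^ (m + 1) := ENNReal.tsum_le_tsum hKm
          _ = δ / 2 := tsum_half_bound _
      have hKmeas : ∀ m, MeasurableSet (K m) := fun m => by
        have := (CU_measurable (hK m)).compl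
        rwa [compl_compl] at this
      have hsub2 : Set.accumulate K N ⊆ ⋃ m, K m := by
        rw [← Set.iUnion_accumulate]
        exact Set.subset_iUnion _ N
      have h2 : μ ((⋃ m, K m) \ Set.accumulate K N) ≤ δ / 2 := by
        rw [measure_diff hsub2 ((MeasurableSet.iUnion fun m => MeasurableSet.iUnion fun _ =>
          hKmeas m) : MeasurableSet (Set.accumulate K N)).nullMeasurableSet
          (coin_ne_top hcoin _)]
        exact tsub_le_iff_left.2 hN
      calc μ ((⋃ m, C m) \ Set.accumulate K N)
          ≤ μ (((⋃ m, C m) \ (⋃ m, K m)) ∪ ((⋃ m, K m) \ Set.accumulate K N)) := measure_mono hsub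
        _ ≤ μ ((⋃ m, C m) \ (⋃ m, K m)) + μ ((⋃ m, K m) \ Set.accumulate K N) := measure_union_le _ _
        _ ≤ δ / 2 + δ / 2 := add_le_add h1 h2
        _ = δ := ENNReal.add_halves δ


lemma apx_iInter {C : ℕ → Set (ℕ → Bool)} (h : ∀ m, Apx μ (C m)) : Apx μ (⋂ m, C m) := by
  have : (⋂ m, C m) = (⋃ m, (C m)ᶜ)ᶜ := by
    rw [Set.compl_iUnion]
    simp
  rw [this]
  exact apx_compl (apx_iUnion hcoin fun m => apx_compl (h m))

omit hcoin in
/-- clopen sets determined by the first k bits -/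
lemma level_mem_CU (P : List Bool → Bool) (k : ℕ) : {A : ℕ → Bool | P (res A k) = true} ∈ CU := by
  refine ⟨{σ | σ.length = k ∧ P σ = true}, ?_⟩
  ext A
  simp only [Set.mem_setOf_eq, Set.mem_iUnion]
  constructor
  · intro h
    exact ⟨res A k, ⟨by simp, h⟩, mem_cyl_res A k⟩
  · rintro ⟨σ, ⟨hlen, hval⟩, hA⟩
    rw [mem_cyl_iff_res] at hA
    rw [← hlen, hA, hval]

omit hcoin in
lemma apx_level (P : List Bool → Bool) (k : ℕ) : Apx μ {A : ℕ → Bool | P (res A k) = true} := by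
  have h1 := level_mem_CU P k
  have h2 : {A : ℕ → Bool | P (res A k) = true}ᶜ = {A : ℕ → Bool | (!P (res A k)) = true} := by
    ext A; simp
  refine ⟨CU_measurable h1, fun δ hδ => ?_⟩
  constructor
  · exact ⟨_, h1, subset_rfl, by simp⟩
  · refine ⟨_, ?_, subset_rfl, by simp⟩
    rw [h2]
    exact level_mem_CU (fun σ => !P σ) k

lemma apx_pi02 (R : ℕ → List Bool → Bool) :
    Apx μ {A : ℕ → Bool | ∀ m, ∃ k, R m (res A k) = true} := by
  have : {A : ℕ → Bool | ∀ m, ∃ k, R m (res A k) = true} =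
      ⋂ m, ⋃ k, {A : ℕ → Bool | R m (res A k) = true} := by
    ext A; simp
  rw [this]
  exact apx_iInter hcoin fun m => apx_iUnion hcoin fun k => apx_level _ _

end Apx

section Null
variable {μ : Measure (ℕ → Bool)}

lemma res_take (A : ℕ → Bool) {k m : ℕ} (h : k ≤ m) : (res A m).take k = res A k := by
  apply List.ext_get (by simp [h])
  intro i h1 h2
  simp only [List.get_eq_getElem, List.getElem_take, res, List.getElem_ofFn]

lemma mem_cyl_append {A : ℕ → Bool} {σ : List Bool} {b : Bool} :
    A ∈ cyl (σ ++ [b]) ↔ A ∈ cyl σ ∧ A σ.length = b := by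
  simp only [mem_cyl_iff_getD, List.length_append, List.length_cons, List.length_nil]
  constructor
  · intro h
    refine ⟨fun i hi => ?_, ?_⟩
    · rw [h i (by omega), List.getD_eq_getElem _ _ (by simp; omega),
        List.getElem_append_left hi, ← List.getD_eq_getElem _ _ (by simpa using hi)]
    · rw [h σ.length (by omega), List.getD_eq_getElem _ _ (by simp)]
      simp
  · rintro ⟨h1, h2⟩ i hi
    by_cases hil : i < σ.length
    · rw [h1 i hil, List.getD_eq_getElem _ _ (by simpa using hil),
        List.getD_eq_getElem _ _ (by simp; omega), List.getElem_append_left hil]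
    · have : i = σ.length := by omega
      subst this
      rw [h2, List.getD_eq_getElem _ _ (by simp)]
      simp

lemma ennreal_q_mul (n : ℕ) :
    ((2:ℝ≥0∞)⁻¹ + 2⁻¹ ^ 2) * 2⁻¹ ^ n = 2⁻¹ ^ (n + 1) + 2⁻¹ ^ (n + 2) := by
  generalize (2:ℝ≥0∞)⁻¹ = x
  ring

lemma ennreal_half_add (k : ℕ) :
    ((2:ℝ≥0∞)⁻¹) ^ (k + 1) + 2⁻¹ ^ (k + 1) = 2⁻¹ ^ k := by
  have : ((2:ℝ≥0∞)⁻¹) ^ (k+1) + 2⁻¹ ^ (k+1) = (2 * 2⁻¹) * 2⁻¹ ^ k := by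
    generalize (2:ℝ≥0∞)⁻¹ = x
    ring
  rw [this, ENNReal.mul_inv_cancel two_ne_zero ENNReal.ofNat_ne_top, one_mul]

lemma ennreal_inv_lt_one : (2:ℝ≥0∞)⁻¹ < 1 :=
  ENNReal.inv_lt_one.2 one_lt_two

lemma ennreal_q_lt_one : ((2:ℝ≥0∞)⁻¹ + 2⁻¹ ^ 2) + 2⁻¹ ^ 3 < 1 := by
  have h32 : ((2:ℝ≥0∞)⁻¹) ^ 3 < 2⁻¹ ^ 2 := by
    have := ENNReal.mul_lt_mul_left (a := (2:ℝ≥0∞)⁻¹ ^ 2) (b := (2:ℝ≥0∞)⁻¹) (c := 1)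
      (pow_ne_zero _ (ENNReal.inv_ne_zero.2 ENNReal.ofNat_ne_top)) (half_pow_ne_top 2)
      ennreal_inv_lt_one
    calc ((2:ℝ≥0∞)⁻¹) ^ 3 = 2⁻¹ * 2⁻¹ ^ 2 := by ring
      _ < 1 * 2⁻¹ ^ 2 := this
      _ = 2⁻¹ ^ 2 := one_mul _
  calc ((2:ℝ≥0∞)⁻¹ + 2⁻¹ ^ 2) + 2⁻¹ ^ 3 = 2⁻¹ + (2⁻¹ ^ 2 + 2⁻¹ ^ 3) := by ring
    _ < 2⁻¹ + (2⁻¹ ^ 2 + 2⁻¹ ^ 2) := by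
        refine ENNReal.add_lt_add_left (by simp) ?_
        exact ENNReal.add_lt_add_left (half_pow_ne_top 2) h32
    _ = 2⁻¹ + 2⁻¹ := by rw [show (2:ℕ) = 1 + 1 from rfl, ennreal_half_add 1, pow_one]
    _ = 1 := by
        have := ennreal_half_add 0
        simpa using this

variable (hcoin : IsCoinMeasure μ)
include hcoin

/-- from positive measure and cylinder-approximability, find a high-density cylinder -/
lemma exists_density_cyl {C : Set (ℕ → Bool)} (hapx : Apx μ C) (hne : μ C ≠ 0) :
    ∃ σ, ((2:ℝ≥0∞)⁻¹ + 2⁻¹ ^ 2) * μ (cyl σ) < μ (C ∩ cyl σ) := by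
  by_contra hcon
  push_neg at hcon
  set q : ℝ≥0∞ := 2⁻¹ + 2⁻¹ ^ 2 with hq
  set c := μ C with hc
  have hctop : c ≠ ⊤ := coin_ne_top hcoin C
  have hδ : c * 2⁻¹ ^ 3 ≠ 0 :=
    mul_ne_zero hne (pow_ne_zero _ (ENNReal.inv_ne_zero.2 ENNReal.ofNat_ne_top))
  obtain ⟨U, hUCU, hCsubU, hUC⟩ := (hapx.2 _ hδ).1
  -- disjointify
  set S' : Set (List Bool) := {σ | cyl σ ⊆ U ∧ ∀ k < σ.length, ¬ cyl (σ.take k) ⊆ U} with hS'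
  have hU' : U = ⋃ σ ∈ S', cyl σ := by
    obtain ⟨S, rfl⟩ := hUCU
    apply Set.Subset.antisymm
    · intro A hA
      obtain ⟨σ₀, hσ₀S, hAσ₀⟩ := by simpa using hA
      have hex : ∃ k, cyl (res A k) ⊆ ⋃ σ ∈ S, cyl σ := by
        refine ⟨σ₀.length, ?_⟩
        rw [mem_cyl_iff_res] at hAσ₀
        rw [hAσ₀]
        exact Set.subset_biUnion_of_mem hσ₀S
      classical
      have hk₀ := Nat.find_spec hex
      have hmin : ∀ k < Nat.find hex, ¬ cyl (res A k) ⊆ ⋃ σ ∈ S, cyl σ :=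
        fun k hk => Nat.find_min hex hk
      refine Set.mem_biUnion ?_ (mem_cyl_res A (Nat.find hex))
      refine ⟨hk₀, fun k hk => ?_⟩
      rw [res_length] at hk
      rw [res_take A hk.le]
      exact hmin k hk
    · intro A hA
      obtain ⟨σ, hσ, hAσ⟩ := by simpa using hA
      exact hσ.1 hAσ
  have hdisj : S'.PairwiseDisjoint cyl := by
    intro σ hσ τ hτ hne'
    simp only [Function.onFun]
    rw [Set.disjoint_left]
    intro A hAσ hAτ
    have hσr := mem_cyl_iff_res.1 hAσ
    have hτr := mem_cyl_iff_res.1 hAτ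
    rcases lt_trichotomy σ.length τ.length with hlt | heq | hlt
    · exact hτ.2 σ.length hlt (by rw [← hτr, res_take A hlt.le, hσr]; exact hσ.1)
    · exact hne' (by rw [← hσr, ← hτr, heq])
    · exact hσ.2 τ.length hlt (by rw [← hσr, res_take A hlt.le, hτr]; exact hτ.1)
  have hUsum : μ U = ∑' σ : S', μ (cyl σ) := by
    rw [hU']
    exact measure_biUnion S'.to_countable hdisj fun σ _ => measurableSet_cyl σ
  have hCU' : μ (C ∩ U) ≤ ∑' σ : S', μ (C ∩ cyl σ) := by
    have : C ∩ U = ⋃ σ ∈ S', (C ∩ cyl σ) := by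
      rw [hU', Set.inter_iUnion₂]
    rw [this]
    exact measure_biUnion_le μ S'.to_countable _
  have hCU : μ (C ∩ U) = c := by rw [Set.inter_eq_self_of_subset_left hCsubU]
  have hμU : μ U ≤ c + c * 2⁻¹ ^ 3 := by
    have : U ⊆ C ∪ (U \ C) := fun x hx => by
      by_cases hxc : x ∈ C
      · exact Or.inl hxc
      · exact Or.inr ⟨hx, hxc⟩
    calc μ U ≤ μ (C ∪ (U \ C)) := measure_mono this
      _ ≤ μ C + μ (U \ C) := measure_union_le _ _
      _ ≤ c + c * 2⁻¹ ^ 3 := add_le_add le_rfl hUC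
  have hfinal : c ≤ (q + 2⁻¹ ^ 3) * c := by
    calc c = μ (C ∩ U) := hCU.symm
      _ ≤ ∑' σ : S', μ (C ∩ cyl σ) := hCU'
      _ ≤ ∑' σ : S', q * μ (cyl σ) := ENNReal.tsum_le_tsum fun σ => hcon σ
      _ = q * ∑' σ : S', μ (cyl σ) := ENNReal.tsum_mul_left
      _ = q * μ U := by rw [hUsum]
      _ ≤ q * (c + c * 2⁻¹ ^ 3) := mul_le_mul_right hμU q
      _ = q * c + q * (c * 2⁻¹ ^ 3) := mul_add q _ _
      _ ≤ q * c + 1 * (c * 2⁻¹ ^ 3) := by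
          refine add_le_add le_rfl (mul_le_mul_left ?_ _)
          calc q ≤ q + 2⁻¹ ^ 3 := le_self_add
            _ ≤ 1 := ennreal_q_lt_one.le
      _ = q * c + 2⁻¹ ^ 3 * c := by rw [one_mul, mul_comm c]
      _ = (q + 2⁻¹ ^ 3) * c := (add_mul q _ c).symm
  have : (q + 2⁻¹ ^ 3) * c < 1 * c := by
    exact ENNReal.mul_lt_mul_left hne hctop ennreal_q_lt_one
  rw [one_mul] at this
  exact absurd (lt_of_le_of_lt hfinal this) (lt_irrefl c)

/-- no element of C can have a single false bit flipped to true staying in C -/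
lemma null_of_flip_free {C : Set (ℕ → Bool)} (hapx : Apx μ C)
    (hfree : ∀ B ∈ C, ∀ n, B n = false → flipFn n B ∉ C) : μ C = 0 := by
  by_contra hne
  obtain ⟨σ, hσ⟩ := exists_density_cyl hcoin hapx hne
  set n := σ.length with hn
  rw [hcoin σ, ennreal_q_mul] at hσ
  have hsplit : ∀ b : Bool, (2:ℝ≥0∞)⁻¹ ^ (n + 2) < μ (C ∩ cyl (σ ++ [b])) := by
    intro b
    have hsub : C ∩ cyl σ ⊆ (C ∩ cyl (σ ++ [b])) ∪ cyl (σ ++ [!b]) := by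
      rintro A ⟨hAC, hAσ⟩
      by_cases hb : A n = b
      · exact Or.inl ⟨hAC, mem_cyl_append.2 ⟨hAσ, hb⟩⟩
      · refine Or.inr (mem_cyl_append.2 ⟨hAσ, ?_⟩)
        cases hAb : A n <;> cases b <;> simp_all
    have h1 : μ (C ∩ cyl σ) ≤ μ (C ∩ cyl (σ ++ [b])) + μ (cyl (σ ++ [!b])) :=
      (measure_mono hsub).trans (measure_union_le _ _)
    rw [hcoin (σ ++ [!b])] at h1
    simp only [List.length_append, List.length_cons, List.length_nil] at h1
    have h2 : (2:ℝ≥0∞)⁻¹ ^ (n + 1) + 2⁻¹ ^ (n + 2) < μ (C ∩ cyl (σ ++ [b])) + 2⁻¹ ^ (n + 1) :=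
      lt_of_lt_of_le hσ (h1.trans (by rw [add_comm]))
    have h3 := (ENNReal.add_lt_add_iff_right (half_pow_ne_top (n+1))).1 (by
      calc (2:ℝ≥0∞)⁻¹ ^ (n + 2) + 2⁻¹ ^ (n+1) = 2⁻¹ ^ (n+1) + 2⁻¹ ^ (n+2) := add_comm _ _
        _ < μ (C ∩ cyl (σ ++ [b])) + 2⁻¹ ^ (n + 1) := h2)
    exact h3
  -- flip argument
  set P := flipFn n ⁻¹' (C ∩ cyl (σ ++ [true])) with hP
  have hPmeas : MeasurableSet P :=
    (flipFn_measurable n) ((hapx.1).inter (measurableSet_cyl _))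
  have hPμ : μ P = μ (C ∩ cyl (σ ++ [true])) :=
    flipFn_measure_preserving hcoin n ((hapx.1).inter (measurableSet_cyl _))
  have hPsub : P ⊆ cyl (σ ++ [false]) := by
    intro A hA
    obtain ⟨hA1, hA2⟩ := hA
    rw [mem_cyl_append] at hA2 ⊢
    have hflipn : flipFn n A n = !(A n) := by simp [flipFn]
    refine ⟨?_, ?_⟩
    · rw [mem_cyl_iff_getD] at hA2 ⊢
      intro i hi
      have := hA2.1 i hi
      rwa [show flipFn n A i = A i from by simp [flipFn]; omega] at this
    · have := hA2.2
      rw [hflipn] at this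
      cases hAn : A n <;> simp [hAn] at this ⊢
  have hPdisj : Disjoint P (C ∩ cyl (σ ++ [false])) := by
    rw [Set.disjoint_left]
    rintro A ⟨hA1, hA2⟩ ⟨hAC, hAσf⟩
    have hAn : A n = false := (mem_cyl_append.1 hAσf).2
    exact hfree A hAC n hAn hA1
  have hunion : μ P + μ (C ∩ cyl (σ ++ [false])) ≤ (2:ℝ≥0∞)⁻¹ ^ (n + 1) := by
    rw [← measure_union hPdisj ((hapx.1).inter (measurableSet_cyl _))]
    have hsub : P ∪ (C ∩ cyl (σ ++ [false])) ⊆ cyl (σ ++ [false]) :=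
      Set.union_subset hPsub Set.inter_subset_right
    have := measure_mono (μ := μ) hsub
    rwa [hcoin (σ ++ [false]), List.length_append] at this
  have hgt : (2:ℝ≥0∞)⁻¹ ^ (n + 1) < μ P + μ (C ∩ cyl (σ ++ [false])) := by
    rw [← ennreal_half_add (n + 1)]
    rw [hPμ]
    exact ENNReal.add_lt_add (by simpa using hsplit true) (by simpa using hsplit false)
  exact absurd (lt_of_lt_of_le hgt hunion) (lt_irrefl _)

end Null

end MeasDev

section Comp
open Nat.Partrec (Code)
open Nat.Partrec.Code Denumerable

/-- big or of a boolean list -/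
def borl (l : List Bool) : Bool := l.foldr (· || ·) false

/-- big and of a boolean list -/
def bandl (l : List Bool) : Bool := l.foldr (· && ·) true

lemma borl_iff (l : List Bool) : borl l = true ↔ ∃ b ∈ l, b = true := by
  induction l with
  | nil => simp [borl]
  | cons a l ih => simp [borl] at ih ⊢; tauto

lemma bandl_iff (l : List Bool) : bandl l = true ↔ ∀ b ∈ l, b = true := by
  induction l with
  | nil => simp [bandl]
  | cons a l ih => simp [bandl] at ih ⊢; tauto

lemma borl_map_iff {α : Type*} (l : List α) (q : α → Bool) :
    borl (l.map q) = true ↔ ∃ j ∈ l, q j = true := by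
  rw [borl_iff]; simp

lemma bandl_map_iff {α : Type*} (l : List α) (q : α → Bool) :
    bandl (l.map q) = true ↔ ∀ j ∈ l, q j = true := by
  rw [bandl_iff]; simp

/-- bounded exists -/
def bexN (k : ℕ) (p : ℕ → Bool) : Bool := borl ((List.range k).map p)

lemma bexN_iff (k : ℕ) (p : ℕ → Bool) : bexN k p = true ↔ ∃ i < k, p i = true := by
  rw [bexN, borl_map_iff]; simp

/-- the list underlying `Dfin` -/
def lstep (st : ℕ × List ℕ) (m : ℕ) : ℕ × List ℕ := (m + st.1 + 1, st.2 ++ [m + st.1])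

def Lfin (y : ℕ) : List ℕ := ((ofNat (List ℕ) y).foldl lstep (0, [])).2

lemma foldl_lstep (l : List ℕ) : ∀ (n : ℕ) (acc : List ℕ),
    (l.foldl lstep (n, acc)).2 = acc ++ raise' l n := by
  induction l with
  | nil => intro n acc; simp [raise']
  | cons m l ih =>
    intro n acc
    simp only [List.foldl_cons, lstep, raise']
    rw [ih]
    simp

lemma mem_Lfin {j y : ℕ} : j ∈ Lfin y ↔ j ∈ Dfin y := by
  have h1 : Lfin y = raise' (ofNat (List ℕ) y) 0 := by
    rw [Lfin, foldl_lstep]; simp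
  have h2 : j ∈ Dfin y ↔ j ∈ Denumerable.ofNat (Finset ℕ) y := Finset.mem_coe
  rw [h1, h2]
  show _ ↔ j ∈ Finset.map _ _
  rw [Finset.mem_map]
  constructor
  · intro h
    exact ⟨j, Multiset.mem_coe.2 h, by simp [eqv]⟩
  · rintro ⟨a, ha, rfl⟩
    have ha' : a ∈ raise' (ofNat (List ℕ) y) 0 := Multiset.mem_coe.1 ha
    simpa [raise'Finset, eqv] using ha'

variable (cd : Code)

def memW (s a : ℕ) : Bool := (evaln s cd a).isSome

def R1 (n : ℕ) (σ : List Bool) : Bool :=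
  !(σ.getD n true) || bexN σ.length (fun y => bexN σ.length (fun s =>
    memW cd s (Nat.pair n y) && bandl ((Lfin y).map fun j => !(σ.getD j true))))

def R2 (n y s : ℕ) (σ : List Bool) : Bool :=
  !(memW cd s (Nat.pair n y)) || borl ((Lfin y).map fun j => σ.getD j false) || σ.getD n false

def RR (m : ℕ) (σ : List Bool) : Bool :=
  if m.unpair.2 = 0 then R1 cd m.unpair.1 σ
  else R2 cd m.unpair.1 (m.unpair.2 - 1).unpair.1 (m.unpair.2 - 1).unpair.2 σ

lemma RR_pair0 (n : ℕ) (σ : List Bool) : RR cd (Nat.pair n 0) σ = R1 cd n σ := by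
  simp [RR]

lemma RR_pair1 (n y s : ℕ) (σ : List Bool) :
    RR cd (Nat.pair n (Nat.pair y s + 1)) σ = R2 cd n y s σ := by
  simp [RR]

lemma res_getD_ft {A : ℕ → Bool} {k j : ℕ} (h : (res A k).getD j true = false) : A j = false := by
  rw [res_getD] at h
  by_cases hj : j < k
  · rwa [if_pos hj] at h
  · rw [if_neg hj] at h; exact absurd h (by simp)

lemma res_getD_tf {A : ℕ → Bool} {k j : ℕ} (h : (res A k).getD j false = true) : A j = true := by
  rw [res_getD] at h
  by_cases hj : j < k
  · rwa [if_pos hj] at h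
  · rw [if_neg hj] at h; exact absurd h (by simp)

lemma mem_toSet_compl {A : ℕ → Bool} {j : ℕ} : j ∈ (toSet A)ᶜ ↔ A j = false := by
  simp [toSet]

theorem RR_correct (W : Set ℕ) (hW : ∀ a, a ∈ W ↔ ∃ s, (evaln s cd a).isSome) (A : ℕ → Bool) :
    (∀ m, ∃ k, RR cd m (res A k) = true) ↔
    (∀ n, A n = true ↔ n ∈ enumOp W (toSet A)ᶜ) := by
  constructor
  · intro H n
    constructor
    · intro hAn
      obtain ⟨k, hk⟩ := H (Nat.pair n 0)
      rw [RR_pair0, R1] at hk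
      rcases Bool.or_eq_true_iff.1 hk with h | h
      · rw [Bool.not_eq_true'] at h
        rw [res_getD_ft h] at hAn
        exact absurd hAn (by simp)
      · obtain ⟨y, _, hy⟩ := (bexN_iff _ _).1 h
        obtain ⟨s, _, hs⟩ := (bexN_iff _ _).1 hy
        obtain ⟨hmem, hball⟩ := Bool.and_eq_true_iff.1 hs
        refine ⟨y, (hW _).2 ⟨s, by simpa [memW] using hmem⟩, fun j hj => ?_⟩
        have := (bandl_map_iff _ _).1 hball j (mem_Lfin.2 hj)
        rw [Bool.not_eq_true'] at this
        exact mem_toSet_compl.2 (res_getD_ft this)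
    · rintro ⟨y, hyW, hsub⟩
      obtain ⟨s, hs⟩ := (hW _).1 hyW
      obtain ⟨k, hk⟩ := H (Nat.pair n (Nat.pair y s + 1))
      rw [RR_pair1, R2] at hk
      rcases Bool.or_eq_true_iff.1 hk with h | h
      · rcases Bool.or_eq_true_iff.1 h with h' | h'
        · rw [Bool.not_eq_true', memW] at h'
          rw [h'] at hs
          exact absurd hs (by simp)
        · obtain ⟨j, hjL, hjv⟩ := (borl_map_iff _ _).1 h'
          have hjA : A j = true := res_getD_tf hjv
          have := mem_toSet_compl.1 (hsub (mem_Lfin.1 hjL))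
          rw [hjA] at this
          exact absurd this (by simp)
      · exact res_getD_tf h
  · intro hiff m
    rcases ht : m.unpair.2 with _ | t'
    · -- R1 case
      have hm : ∀ σ, RR cd m σ = R1 cd m.unpair.1 σ := by
        intro σ; rw [RR, ht]; simp
      set n := m.unpair.1 with hn
      by_cases hA : A n = true
      · obtain ⟨y, hyW, hsub⟩ := (hiff n).1 hA
        obtain ⟨s, hs⟩ := (hW _).1 hyW
        set k := (Lfin y).sum + y + s + n + 1 with hkdef
        refine ⟨k, ?_⟩
        rw [hm, R1]
        apply Bool.or_eq_true_iff.2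
        right
        rw [res_length]
        apply (bexN_iff _ _).2
        refine ⟨y, by omega, ?_⟩
        apply (bexN_iff _ _).2
        refine ⟨s, by omega, ?_⟩
        apply Bool.and_eq_true_iff.2
        constructor
        · simpa [memW] using hs
        · apply (bandl_map_iff _ _).2
          intro j hj
          have hjs : j ≤ (Lfin y).sum := List.single_le_sum (fun _ _ => Nat.zero_le _) j hj
          have hjA : A j = false := mem_toSet_compl.1 (hsub (mem_Lfin.1 hj))
          rw [Bool.not_eq_true', res_getD, if_pos (by omega), hjA]
      · refine ⟨n + 1, ?_⟩
        rw [hm, R1]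
        apply Bool.or_eq_true_iff.2
        left
        rw [Bool.not_eq_true', res_getD, if_pos (by omega)]
        exact Bool.not_eq_true _ ▸ (by simpa using hA)
    · -- R2 case
      have hm : ∀ σ, RR cd m σ = R2 cd m.unpair.1 t'.unpair.1 t'.unpair.2 σ := by
        intro σ; rw [RR, ht]; simp
      set n := m.unpair.1
      set y := t'.unpair.1
      set s := t'.unpair.2
      by_cases hmw : memW cd s (Nat.pair n y) = true
      · have hyW : Nat.pair n y ∈ W := (hW _).2 ⟨s, by simpa [memW] using hmw⟩
        by_cases hsub : Dfin y ⊆ (toSet A)ᶜ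
        · have hAn : A n = true := (hiff n).2 ⟨y, hyW, hsub⟩
          refine ⟨n + 1, ?_⟩
          rw [hm, R2]
          apply Bool.or_eq_true_iff.2
          right
          rw [res_getD, if_pos (by omega)]
          exact hAn
        · obtain ⟨j, hjD, hjA⟩ := Set.not_subset.1 hsub
          have hjA' : A j = true := by
            by_contra hc
            exact hjA (mem_toSet_compl.2 (by simpa using hc))
          refine ⟨j + 1, ?_⟩
          rw [hm, R2]
          apply Bool.or_eq_true_iff.2
          left
          apply Bool.or_eq_true_iff.2
          right
          apply (borl_map_iff _ _).2
          exact ⟨j, mem_Lfin.2 hjD, by rw [res_getD, if_pos (by omega)]; exact hjA'⟩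
      · refine ⟨0, ?_⟩
        rw [hm, R2]
        apply Bool.or_eq_true_iff.2
        left
        apply Bool.or_eq_true_iff.2
        left
        rw [Bool.not_eq_true']
        simpa using hmw


section PR
open Primrec

lemma primrec_or2 : Primrec₂ (· || ·) := Primrec.dom_bool₂ _
lemma primrec_and2 : Primrec₂ (· && ·) := Primrec.dom_bool₂ _
lemma primrec_not : Primrec Bool.not := Primrec.dom_bool _

lemma primrec_borl : Primrec borl :=
  Primrec.list_foldr Primrec.id (Primrec.const false)
    (primrec_or2.comp (Primrec.fst.comp Primrec.snd) (Primrec.snd.comp Primrec.snd)).to₂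

lemma primrec_bandl : Primrec bandl :=
  Primrec.list_foldr Primrec.id (Primrec.const true)
    (primrec_and2.comp (Primrec.fst.comp Primrec.snd) (Primrec.snd.comp Primrec.snd)).to₂

lemma primrec_Lfin : Primrec Lfin := by
  have h1 : Primrec fun p : (ℕ × List ℕ) × ℕ => p.2 + p.1.1 :=
    Primrec.nat_add.comp Primrec.snd (Primrec.fst.comp Primrec.fst)
  have hstep : Primrec₂ fun (_ : ℕ) (p : (ℕ × List ℕ) × ℕ) => lstep p.1 p.2 := by
    have hs : Primrec fun p : (ℕ × List ℕ) × ℕ =>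
        ((p.2 + p.1.1 + 1, p.1.2 ++ [p.2 + p.1.1]) : ℕ × List ℕ) :=
      Primrec.pair (Primrec.succ.comp h1)
        (Primrec.list_concat.comp (Primrec.snd.comp Primrec.fst) h1)
    exact (hs.comp Primrec.snd).to₂
  exact Primrec.snd.comp
    (Primrec.list_foldl (Primrec.ofNat (List ℕ)) (Primrec.const ((0, []) : ℕ × List ℕ)) hstep)

variable (cd : Nat.Partrec.Code)

lemma primrec_memW : Primrec₂ (memW cd) :=
  Primrec.option_isSome.comp
    (Nat.Partrec.Code.primrec_evaln.comp
      (Primrec.pair (Primrec.pair Primrec.fst (Primrec.const cd)) Primrec.snd))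

set_option maxHeartbeats 1000000 in
lemma primrec_R1 : Primrec fun p : ℕ × List Bool => R1 cd p.1 p.2 := by
  have hgetD : Primrec₂ fun (l : List Bool) (n : ℕ) => l.getD n true := Primrec.list_getD true
  have h_inner2 : Primrec fun q : ((ℕ × List Bool) × ℕ) × ℕ =>
      memW cd q.2 (Nat.pair q.1.1.1 q.1.2) &&
        bandl ((Lfin q.1.2).map fun j => !(q.1.1.2.getD j true)) := by
    refine primrec_and2.comp ?_ ?_
    · exact (primrec_memW cd).comp Primrec.snd
        (Primrec₂.natPair.comp (Primrec.fst.comp (Primrec.fst.comp Primrec.fst))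
          (Primrec.snd.comp Primrec.fst))
    · refine primrec_bandl.comp (Primrec.list_map (primrec_Lfin.comp
        (Primrec.snd.comp Primrec.fst)) ?_)
      exact (primrec_not.comp (hgetD.comp
        (Primrec.snd.comp (Primrec.fst.comp (Primrec.fst.comp Primrec.fst)))
        Primrec.snd)).to₂
  have h_inner1 : Primrec fun q : (ℕ × List Bool) × ℕ =>
      bexN q.1.2.length (fun s => memW cd s (Nat.pair q.1.1 q.2) &&
        bandl ((Lfin q.2).map fun j => !(q.1.2.getD j true))) := by
    refine primrec_borl.comp (Primrec.list_map
      (Primrec.list_range.comp (Primrec.list_length.comp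
        (Primrec.snd.comp Primrec.fst))) ?_)
    exact h_inner2.to₂
  have h_top : Primrec fun p : ℕ × List Bool =>
      bexN p.2.length (fun y => bexN p.2.length (fun s => memW cd s (Nat.pair p.1 y) &&
        bandl ((Lfin y).map fun j => !(p.2.getD j true)))) := by
    refine primrec_borl.comp (Primrec.list_map
      (Primrec.list_range.comp (Primrec.list_length.comp Primrec.snd)) ?_)
    exact h_inner1.to₂
  exact primrec_or2.comp (primrec_not.comp (hgetD.comp Primrec.snd Primrec.fst)) h_top

lemma primrec_R2 : Primrec fun r : (ℕ × ℕ × ℕ) × List Bool =>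
    R2 cd r.1.1 r.1.2.1 r.1.2.2 r.2 := by
  have h_n : Primrec fun r : (ℕ × ℕ × ℕ) × List Bool => r.1.1 :=
    Primrec.fst.comp Primrec.fst
  have h_y : Primrec fun r : (ℕ × ℕ × ℕ) × List Bool => r.1.2.1 :=
    Primrec.fst.comp (Primrec.snd.comp Primrec.fst)
  have h_s : Primrec fun r : (ℕ × ℕ × ℕ) × List Bool => r.1.2.2 :=
    Primrec.snd.comp (Primrec.snd.comp Primrec.fst)
  have part1 : Primrec fun r : (ℕ × ℕ × ℕ) × List Bool =>
      !(memW cd r.1.2.2 (Nat.pair r.1.1 r.1.2.1)) :=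
    primrec_not.comp ((primrec_memW cd).comp h_s (Primrec₂.natPair.comp h_n h_y))
  have part2 : Primrec fun r : (ℕ × ℕ × ℕ) × List Bool =>
      borl ((Lfin r.1.2.1).map fun j => r.2.getD j false) := by
    refine primrec_borl.comp (Primrec.list_map (primrec_Lfin.comp h_y) ?_)
    exact ((Primrec.list_getD false).comp (Primrec.snd.comp Primrec.fst) Primrec.snd).to₂
  have part3 : Primrec fun r : (ℕ × ℕ × ℕ) × List Bool => r.2.getD r.1.1 false :=
    (Primrec.list_getD false).comp Primrec.snd h_n
  exact primrec_or2.comp (primrec_or2.comp part1 part2) part3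

set_option maxHeartbeats 4000000 in
lemma primrec_RR : Primrec fun p : ℕ × List Bool => RR cd p.1 p.2 := by
  have hu1 : Primrec fun p : ℕ × List Bool => p.1.unpair.1 :=
    Primrec.fst.comp (Primrec.unpair.comp Primrec.fst)
  have hu2 : Primrec fun p : ℕ × List Bool => p.1.unpair.2 :=
    Primrec.snd.comp (Primrec.unpair.comp Primrec.fst)
  have hcond : PrimrecPred fun p : ℕ × List Bool => p.1.unpair.2 = 0 :=
    Primrec.eq.comp hu2 (Primrec.const 0)
  have hb1 : Primrec fun p : ℕ × List Bool => R1 cd p.1.unpair.1 p.2 :=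
    (primrec_R1 cd).comp (Primrec.pair hu1 Primrec.snd)
  have hb2 : Primrec fun p : ℕ × List Bool =>
      R2 cd p.1.unpair.1 (p.1.unpair.2 - 1).unpair.1 (p.1.unpair.2 - 1).unpair.2 p.2 := by
    have hpred : Primrec fun p : ℕ × List Bool => (p.1.unpair.2 - 1).unpair :=
      Primrec.unpair.comp (Primrec.pred.comp hu2)
    exact (primrec_R2 cd).comp (Primrec.pair (Primrec.pair hu1
      (Primrec.pair (Primrec.fst.comp hpred) (Primrec.snd.comp hpred))) Primrec.snd)
  exact Primrec.ite hcond hb1 hb2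

end PR

end Comp

open Nat.Partrec.Code in
theorem stmt_11' (μ : Measure (ℕ → Bool)) (hμ : IsCoinMeasure μ)
    (A : ℕ → Bool) (h : Weak2Random μ A) : ¬ Cototal (toSet A) := by
  rintro ⟨W, ⟨f, hfpart, hfdom⟩, hAeq⟩
  obtain ⟨cd, hcd⟩ := Nat.Partrec.Code.exists_code.1 (Partrec.nat_iff.1 hfpart)
  have hW : ∀ a, a ∈ W ↔ ∃ s, (evaln s cd a).isSome := by
    intro a
    rw [hfdom]
    show (f a).Dom ↔ _
    constructor
    · intro hdom
      have hx : (f a).get hdom ∈ f a := Part.get_mem hdom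
      have hx' : (f a).get hdom ∈ cd.eval a := by rw [hcd]; exact hx
      obtain ⟨k, hk⟩ := evaln_complete.1 hx'
      exact ⟨k, Option.isSome_iff_exists.2 ⟨_, hk⟩⟩
    · rintro ⟨s, hs⟩
      obtain ⟨x, hx⟩ := Option.isSome_iff_exists.1 hs
      have hxe := evaln_sound hx
      rw [hcd] at hxe
      exact Part.dom_iff_mem.2 ⟨x, hxe⟩
  set C := {B : ℕ → Bool | ∀ m, ∃ k, RR cd m (res B k) = true} with hCdef
  have hmemprop : ∀ B : ℕ → Bool, B ∈ C ↔ ∀ n, B n = true ↔ n ∈ enumOp W (toSet B)ᶜ :=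
    fun B => RR_correct cd W hW B
  have hmemC : A ∈ C := by
    rw [hmemprop]
    intro n
    have := Set.ext_iff.1 hAeq n
    exact this
  have hPi02 : IsPi02 C := ⟨RR cd, (primrec_RR cd).to_comp, rfl⟩
  have hApx : Apx μ C := apx_pi02 hμ (RR cd)
  have hfree : ∀ B ∈ C, ∀ n, B n = false → flipFn n B ∉ C := by
    intro B hB n hBn hB'
    have hPB := (hmemprop B).1 hB
    have hPB' := (hmemprop _).1 hB'
    have hB'n : flipFn n B n = true := by simp [flipFn, hBn]
    obtain ⟨y, hyW, hsub⟩ := (hPB' n).1 hB'n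
    have hsub' : Dfin y ⊆ (toSet B)ᶜ := by
      intro j hj
      have hjf := mem_toSet_compl.1 (hsub hj)
      rw [mem_toSet_compl]
      by_cases hjn : j = n
      · subst hjn; exact hBn
      · rwa [show flipFn n B j = B j from by simp [flipFn, hjn]] at hjf
    have : B n = true := (hPB n).2 ⟨y, hyW, hsub'⟩
    rw [this] at hBn
    exact absurd hBn (by simp)
  exact h C hPi02 (null_of_flip_free hμ hApx hfree) hmemC

/-- No weakly 2-random set is cototal. -/
theorem stmt_11 (μ : Measure (ℕ → Bool)) (hμ : IsCoinMeasure μ)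
    (A : ℕ → Bool) (h : Weak2Random μ A) : ¬ Cototal (toSet A) := stmt_11' μ hμ A h
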